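/- Let Y and Z be independent random variables with Y ~ Exp(λ_Y) and Z ~ Exp(λ_Z), where λ_Y, λ_Z > 0. Let μ : (0,∞) → (0,∞) satisfy μ(δ)/δ → a as δ → 0⁺ for some finite a ≥ 0, and let h : (0,∞) → (0,∞) be continuous with h(δ) → 0 and δ/h(δ) → d₁ for some finite d₁ as δ → 0⁺. Then limsup_{δ → 0⁺} (1/h(δ)) · P( δ · f(Y/δ, Z/μ(δ)) < h(δ) ) ≤ λ_Y + a·λ_Z. -/

import Mathlib

open MeasureTheory ProbabilityTheory Filter Set

/-- The amplify-and-forward combining function `f(x,y) = x·y/(x+y+1)`. -/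
noncomputable def f (x y : ℝ) : ℝ := x * y / (x + y + 1)


lemma exp_Iic_bound {Ω : Type*} [MeasurableSpace Ω] (P : Measure Ω) [IsProbabilityMeasure P]
    {l : ℝ} (hl : 0 < l) {X : Ω → ℝ} (hX : Measurable X)
    (hXd : Measure.map X P = expMeasure l) {t : ℝ} (ht : 0 ≤ t) :
    (P (X ⁻¹' Iic t)).toReal ≤ l * t := by
  haveI := isProbabilityMeasure_expMeasure hl
  have h1 : P (X ⁻¹' Iic t) = expMeasure l (Iic t) := by
    rw [← hXd, Measure.map_apply hX measurableSet_Iic]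
  rw [h1]
  change (expMeasure l).real (Iic t) ≤ _
  rw [← ProbabilityTheory.cdf_eq_real, cdf_expMeasure_eq hl, if_pos ht]
  have := Real.add_one_le_exp (-(l * t))
  linarith

lemma exp_Iio_bound {Ω : Type*} [MeasurableSpace Ω] (P : Measure Ω) [IsProbabilityMeasure P]
    {l : ℝ} (hl : 0 < l) {X : Ω → ℝ} (hX : Measurable X)
    (hXd : Measure.map X P = expMeasure l) {t : ℝ} (ht : 0 ≤ t) :
    (P (X ⁻¹' Iio t)).toReal ≤ l * t :=
  le_trans (ENNReal.toReal_mono (measure_ne_top P _)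
    (measure_mono (preimage_mono Iio_subset_Iic_self))) (exp_Iic_bound P hl hX hXd ht)

lemma alg_bound {δ H M s y z : ℝ} (hδ : 0 < δ) (hH : 0 < H) (hM : 0 < M)
    (hs : H < s) (hsY : s ≤ y)
    (hω : δ * f (y / δ) (z / M) < H) :
    z < M * (H * (s + δ)) / (δ * (s - H)) := by
  have hden2 : 0 < δ * (s - H) := mul_pos hδ (by linarith)
  have hnum2 : 0 < M * (H * (s + δ)) := mul_pos hM (mul_pos hH (by linarith))
  by_cases hZ0 : z ≤ 0
  · exact lt_of_le_of_lt hZ0 (div_pos hnum2 hden2)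
  push_neg at hZ0
  have hy : 0 < y := lt_of_lt_of_le (lt_trans hH hs) hsY
  have hden : 0 < y / δ + z / M + 1 := by positivity
  unfold f at hω
  rw [← mul_div_assoc, div_lt_iff₀ hden] at hω
  have h2 := mul_lt_mul_of_pos_right hω (mul_pos hδ hM)
  have e1 : δ * (y / δ * (z / M)) * (δ * M) = y * z * δ := by
    field_simp
  have e2 : H * (y / δ + z / M + 1) * (δ * M) = H * (y * M + z * δ + δ * M) := by
    field_simp
  rw [e1, e2] at h2
  have hb1 : z < M * (H * (y + δ)) / (δ * (y - H)) := by
    rw [lt_div_iff₀ (mul_pos hδ (by linarith))]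
    nlinarith
  refine lt_of_lt_of_le hb1 ?_
  have key0 : (y + δ) * (s - H) ≤ (s + δ) * (y - H) := by
    nlinarith [mul_nonneg (by linarith : (0:ℝ) ≤ δ + H) (by linarith : 0 ≤ y - s)]
  rw [div_le_div_iff₀ (mul_pos hδ (by linarith)) hden2]
  nlinarith [mul_le_mul_of_nonneg_left key0 (show (0:ℝ) ≤ M * H * δ by positivity)]

lemma ratio_eq {δ H M ε T lamY lamZ : ℝ} (hδ : δ ≠ 0) (hH : H ≠ 0) (hε : ε ≠ 0)
    (hTh : T - H ≠ 0) :
    (1 / H) * (lamY * ((1 + ε) * H)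
      + (lamY * T) * (lamZ * (M * (H * ((1 + ε) * H + δ)) / (δ * ((1 + ε) * H - H))))
      + lamZ * (M * (H * (T + δ)) / (δ * (T - H))))
    = lamY * (1 + ε) + lamY * lamZ * T * ((M / δ) * ((1 + ε) + δ / H) / ε)
      + lamZ * ((M / δ) * (T + δ) / (T - H)) := by
  have h1 : (1 + ε) * H - H = ε * H := by ring
  rw [h1]
  field_simp

/-- **limsup/converse half of Lemma 2 of the paper.**
For independent `Y ~ Exp(λ_Y)`, `Z ~ Exp(λ_Z)`, with `μ(δ)/δ → a` and a continuous
positive `h` with `h(δ) → 0` and `δ/h(δ) → d₁ < ∞` as `δ → 0⁺`,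
`limsup_{δ → 0⁺} (1/h(δ)) · P( δ·f(Y/δ, Z/μ(δ)) < h(δ) ) ≤ λ_Y + a·λ_Z`. -/
theorem relay_path_limsup_upper_bound
    {Ω : Type*} [MeasurableSpace Ω] (P : Measure Ω) [IsProbabilityMeasure P]
    (lamY lamZ : ℝ) (hlamY : 0 < lamY) (hlamZ : 0 < lamZ)
    (Y Z : Ω → ℝ) (hY : Measurable Y) (hZ : Measurable Z)
    (hYdist : Measure.map Y P = expMeasure lamY)
    (hZdist : Measure.map Z P = expMeasure lamZ)
    (hindep : IndepFun Y Z P)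
    (μ : ℝ → ℝ) (hμ_pos : ∀ δ ∈ Ioi (0:ℝ), 0 < μ δ)
    (a : ℝ) (ha : 0 ≤ a)
    (hμa : Tendsto (fun δ => μ δ / δ) (nhdsWithin 0 (Ioi 0)) (nhds a))
    (h : ℝ → ℝ) (hh_pos : ∀ δ ∈ Ioi (0:ℝ), 0 < h δ)
    (hh_cont : ContinuousOn h (Ioi 0))
    (hh_lim : Tendsto h (nhdsWithin 0 (Ioi 0)) (nhds 0))
    (d₁ : ℝ)
    (hd₁ : Tendsto (fun δ => δ / h δ) (nhdsWithin 0 (Ioi 0)) (nhds d₁)) :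
    Filter.limsup
        (fun δ => (1 / h δ) * (P {ω | δ * f (Y ω / δ) (Z ω / μ δ) < h δ}).toReal)
        (nhdsWithin 0 (Ioi 0)) ≤ lamY + a * lamZ := by
  set F : ℝ → ℝ :=
    fun δ => (1 / h δ) * (P {ω | δ * f (Y ω / δ) (Z ω / μ δ) < h δ}).toReal with hFdef
  have hne : (nhdsWithin (0:ℝ) (Ioi 0)).NeBot := nhdsGT_neBot 0
  have hd₁0 : 0 ≤ d₁ := by
    refine ge_of_tendsto hd₁ ?_
    filter_upwards [self_mem_nhdsWithin] with δ hδ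
    exact div_nonneg (le_of_lt hδ) (hh_pos δ hδ).le
  have hF0 : ∀ᶠ δ in nhdsWithin (0:ℝ) (Ioi 0), (0:ℝ) ≤ F δ := by
    filter_upwards [self_mem_nhdsWithin] with δ hδ
    exact mul_nonneg (one_div_nonneg.2 (hh_pos δ hδ).le) ENNReal.toReal_nonneg
  have key : ∀ ε : ℝ, 0 < ε → ∀ T : ℝ, 0 < T →
      Filter.limsup F (nhdsWithin 0 (Ioi 0)) ≤
        lamY * (1 + ε) + lamY * lamZ * T * (a * ((1 + ε) + d₁) / ε)
          + lamZ * (a * (T + 0) / (T - 0)) := by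
    intro ε hε T hT
    set G : ℝ → ℝ := fun δ =>
      lamY * (1 + ε) + lamY * lamZ * T * ((μ δ / δ) * ((1 + ε) + δ / h δ) / ε)
        + lamZ * ((μ δ / δ) * (T + δ) / (T - h δ)) with hGdef
    have hid : Tendsto (fun δ : ℝ => δ) (nhdsWithin 0 (Ioi 0)) (nhds 0) :=
      tendsto_id.mono_left nhdsWithin_le_nhds
    have hG : Tendsto G (nhdsWithin 0 (Ioi 0)) (nhds
        (lamY * (1 + ε) + lamY * lamZ * T * (a * ((1 + ε) + d₁) / ε)
          + lamZ * (a * (T + 0) / (T - 0)))) := by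
      refine Tendsto.add (Tendsto.add tendsto_const_nhds (Tendsto.mul tendsto_const_nhds
        ((hμa.mul (tendsto_const_nhds.add hd₁)).div_const ε))) (Tendsto.mul tendsto_const_nhds
        (Tendsto.div (hμa.mul (tendsto_const_nhds.add hid)) (tendsto_const_nhds.sub hh_lim)
          (by simpa using hT.ne')))
    have hFG : ∀ᶠ δ in nhdsWithin (0:ℝ) (Ioi 0), F δ ≤ G δ := by
      have hTev : ∀ᶠ δ in nhdsWithin (0:ℝ) (Ioi 0), h δ < T :=
        hh_lim.eventually_lt_const hT
      filter_upwards [self_mem_nhdsWithin, hTev] with δ hδpos hδT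
      have hδ : (0:ℝ) < δ := hδpos
      have hhδ : 0 < h δ := hh_pos δ hδpos
      have hμδ : 0 < μ δ := hμ_pos δ hδpos
      have ht1h : h δ < (1 + ε) * h δ := by nlinarith
      set c2 : ℝ := μ δ * (h δ * ((1 + ε) * h δ + δ)) / (δ * ((1 + ε) * h δ - h δ)) with hc2def
      set c3 : ℝ := μ δ * (h δ * (T + δ)) / (δ * (T - h δ)) with hc3def
      have hc2pos : 0 < c2 :=
        div_pos (mul_pos hμδ (mul_pos hhδ (by linarith))) (mul_pos hδ (by linarith))
      have hc3pos : 0 < c3 :=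
        div_pos (mul_pos hμδ (mul_pos hhδ (by linarith))) (mul_pos hδ (by linarith))
      have incl : {ω | δ * f (Y ω / δ) (Z ω / μ δ) < h δ} ⊆
          (Y ⁻¹' Iio ((1 + ε) * h δ) ∪ (Y ⁻¹' Iic T ∩ Z ⁻¹' Iio c2)) ∪ Z ⁻¹' Iio c3 := by
        intro ω hω
        by_cases h1 : Y ω < (1 + ε) * h δ
        · exact Or.inl (Or.inl h1)
        push_neg at h1
        by_cases h2 : Y ω ≤ T
        · exact Or.inl (Or.inr ⟨h2, alg_bound hδ hhδ hμδ ht1h h1 hω⟩)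
        · push_neg at h2
          exact Or.inr (alg_bound hδ hhδ hμδ hδT h2.le hω)
      have mono1 : P {ω | δ * f (Y ω / δ) (Z ω / μ δ) < h δ} ≤
          P (Y ⁻¹' Iio ((1 + ε) * h δ)) + P (Y ⁻¹' Iic T ∩ Z ⁻¹' Iio c2)
            + P (Z ⁻¹' Iio c3) := by
        refine le_trans (measure_mono incl) (le_trans (measure_union_le _ _) ?_)
        exact add_le_add_left (measure_union_le _ _) _
      have htr : (P {ω | δ * f (Y ω / δ) (Z ω / μ δ) < h δ}).toReal ≤
          (P (Y ⁻¹' Iio ((1 + ε) * h δ))).toReal + (P (Y ⁻¹' Iic T ∩ Z ⁻¹' Iio c2)).toReal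
            + (P (Z ⁻¹' Iio c3)).toReal := by
        have hfin : P (Y ⁻¹' Iio ((1 + ε) * h δ)) + P (Y ⁻¹' Iic T ∩ Z ⁻¹' Iio c2)
            + P (Z ⁻¹' Iio c3) ≠ ⊤ := by
          refine ENNReal.add_ne_top.2 ⟨ENNReal.add_ne_top.2 ⟨?_, ?_⟩, ?_⟩ <;>
            exact measure_ne_top P _
        have h5 := ENNReal.toReal_mono hfin mono1
        rwa [ENNReal.toReal_add (ENNReal.add_ne_top.2 ⟨measure_ne_top P _, measure_ne_top P _⟩)
          (measure_ne_top P _), ENNReal.toReal_add (measure_ne_top P _) (measure_ne_top P _)]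
          at h5
      have m1 : (P (Y ⁻¹' Iio ((1 + ε) * h δ))).toReal ≤ lamY * ((1 + ε) * h δ) :=
        exp_Iio_bound P hlamY hY hYdist (by positivity)
      have m2 : (P (Y ⁻¹' Iic T ∩ Z ⁻¹' Iio c2)).toReal ≤ (lamY * T) * (lamZ * c2) := by
        rw [hindep.measure_inter_preimage_eq_mul _ _ measurableSet_Iic measurableSet_Iio,
          ENNReal.toReal_mul]
        exact mul_le_mul (exp_Iic_bound P hlamY hY hYdist hT.le)
          (exp_Iio_bound P hlamZ hZ hZdist hc2pos.le) ENNReal.toReal_nonneg (by positivity)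
      have m3 : (P (Z ⁻¹' Iio c3)).toReal ≤ lamZ * c3 :=
        exp_Iio_bound P hlamZ hZ hZdist hc3pos.le
      have hFle : F δ ≤ (1 / h δ) * (lamY * ((1 + ε) * h δ) + (lamY * T) * (lamZ * c2)
          + lamZ * c3) := by
        refine mul_le_mul_of_nonneg_left ?_ (one_div_nonneg.2 hhδ.le)
        linarith
      refine le_trans hFle (le_of_eq ?_)
      rw [hc2def, hc3def, hGdef]
      exact ratio_eq hδ.ne' hhδ.ne' hε.ne' (by intro hh0; nlinarith)
    calc Filter.limsup F (nhdsWithin 0 (Ioi 0))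
        ≤ Filter.limsup G (nhdsWithin 0 (Ioi 0)) :=
          limsup_le_limsup hFG (isCoboundedUnder_le_of_eventually_le _ hF0)
            hG.isBoundedUnder_le
      _ = _ := hG.limsup_eq
  refine le_of_forall_pos_le_add ?_
  intro η hη
  set ε : ℝ := η / (2 * lamY) with hεdef
  have hεpos : 0 < ε := by positivity
  set C : ℝ := lamY * lamZ * (a * ((1 + ε) + d₁) / ε) with hCdef
  have hC0 : 0 ≤ C := by positivity
  set T : ℝ := min 1 (η / (2 * (C + 1))) with hTdef
  have hTpos : 0 < T := lt_min one_pos (by positivity)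
  have hkey := key ε hεpos T hTpos
  have e3 : a * (T + 0) / (T - 0) = a := by
    rw [add_zero, sub_zero, mul_div_assoc, div_self hTpos.ne', mul_one]
  rw [e3] at hkey
  refine le_trans hkey ?_
  have h1 : lamY * (1 + ε) = lamY + η / 2 := by
    rw [hεdef]; field_simp
  have h2 : lamY * lamZ * T * (a * ((1 + ε) + d₁) / ε) = T * C := by
    rw [hCdef]; ring
  have h3 : T * C ≤ η / 2 := by
    have hTle : T ≤ η / (2 * (C + 1)) := min_le_right _ _
    have h4 : T * C ≤ (η / (2 * (C + 1))) * C :=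
      mul_le_mul_of_nonneg_right hTle hC0
    refine le_trans h4 ?_
    rw [div_mul_eq_mul_div, div_le_div_iff₀ (by positivity) (by norm_num)]
    nlinarith
  rw [h1, h2]
  nlinarith
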